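/- Every sequence of n distinct real numbers can be partitioned into at most 2⌈√n⌉ monotone subsequences, i.e., the index set Fin n can be partitioned into at most 2⌈√n⌉ sets, on each of which the sequence is strictly monotone. -/

import Mathlib

open Finset

/-- Erdős–Szekeres on a subset: if `S` has more than `k*k` elements, it contains a
monotone subset of size `k+1`. -/
theorem es_aux {n : ℕ} (a : Fin n → ℝ) (ha : Function.Injective a)
    (k : ℕ) (S : Finset (Fin n)) (h : k * k < S.card) :
    ∃ T ⊆ S, T.card = k + 1 ∧ (StrictMonoOn a ↑T ∨ StrictAntiOn a ↑T) := by
  classical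
  by_cases hbig : ∃ U ∈ S.powerset, k + 1 ≤ U.card ∧
      (StrictMonoOn a ↑U ∨ StrictAntiOn a ↑U)
  · obtain ⟨U, hU, hcard, hmono⟩ := hbig
    obtain ⟨T, hTU, hT⟩ := Finset.exists_subset_card_eq hcard
    refine ⟨T, hTU.trans (Finset.mem_powerset.mp hU), hT, ?_⟩
    rcases hmono with h1 | h1
    · exact Or.inl (h1.mono (Finset.coe_subset.mpr hTU))
    · exact Or.inr (h1.mono (Finset.coe_subset.mpr hTU))
  push_neg at hbig
  -- longest increasing / decreasing chains ending at i
  set incs : Fin n → Finset (Finset (Fin n)) := fun i =>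
    S.powerset.filter fun U => i ∈ U ∧ (∀ x ∈ U, x ≤ i) ∧ StrictMonoOn a ↑U with hincs
  set decs : Fin n → Finset (Finset (Fin n)) := fun i =>
    S.powerset.filter fun U => i ∈ U ∧ (∀ x ∈ U, x ≤ i) ∧ StrictAntiOn a ↑U with hdecs
  set f : Fin n → ℕ := fun i => (incs i).sup Finset.card with hf
  set g : Fin n → ℕ := fun i => (decs i).sup Finset.card with hg
  have hsingmono : ∀ i : Fin n, StrictMonoOn a ({i} : Finset (Fin n)) := by
    intro i x hx y hy hxy
    simp only [Finset.coe_singleton, Set.mem_singleton_iff] at hx hy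
    subst hx; subst hy; exact absurd hxy (lt_irrefl _)
  have hsinganti : ∀ i : Fin n, StrictAntiOn a ({i} : Finset (Fin n)) := by
    intro i x hx y hy hxy
    simp only [Finset.coe_singleton, Set.mem_singleton_iff] at hx hy
    subst hx; subst hy; exact absurd hxy (lt_irrefl _)
  have hincne : ∀ i ∈ S, ({i} : Finset (Fin n)) ∈ incs i := by
    intro i hi
    simp only [hincs, Finset.mem_filter, Finset.mem_powerset]
    refine ⟨Finset.singleton_subset_iff.mpr hi, Finset.mem_singleton_self i, ?_, hsingmono i⟩
    intro x hx; rw [Finset.mem_singleton] at hx; exact hx.le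
  have hdecne : ∀ i ∈ S, ({i} : Finset (Fin n)) ∈ decs i := by
    intro i hi
    simp only [hdecs, Finset.mem_filter, Finset.mem_powerset]
    refine ⟨Finset.singleton_subset_iff.mpr hi, Finset.mem_singleton_self i, ?_, hsinganti i⟩
    intro x hx; rw [Finset.mem_singleton] at hx; exact hx.le
  have hf1 : ∀ i ∈ S, 1 ≤ f i := by
    intro i hi
    have h2 := Finset.le_sup (f := Finset.card) (hincne i hi)
    rw [Finset.card_singleton] at h2
    exact h2
  have hg1 : ∀ i ∈ S, 1 ≤ g i := by
    intro i hi
    have h2 := Finset.le_sup (f := Finset.card) (hdecne i hi)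
    rw [Finset.card_singleton] at h2
    exact h2
  have hfk : ∀ i ∈ S, f i ≤ k := by
    intro i hi
    apply Finset.sup_le
    intro U hU
    simp only [hincs, Finset.mem_filter] at hU
    by_contra hc
    exact (hbig U hU.1 (by omega)).1 hU.2.2.2
  have hgk : ∀ i ∈ S, g i ≤ k := by
    intro i hi
    apply Finset.sup_le
    intro U hU
    simp only [hdecs, Finset.mem_filter] at hU
    by_contra hc
    exact (hbig U hU.1 (by omega)).2 hU.2.2.2
  -- key step: f and g strictly increase along increasing/decreasing pairs
  have keyf : ∀ i ∈ S, ∀ j ∈ S, i < j → a i < a j → f i + 1 ≤ f j := by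
    intro i hi j hj hij haij
    obtain ⟨U, hU, hUcard⟩ := Finset.exists_mem_eq_sup (incs i) ⟨_, hincne i hi⟩ Finset.card
    simp only [hincs, Finset.mem_filter, Finset.mem_powerset] at hU
    obtain ⟨hUS, hiU, hUle, hUmono⟩ := hU
    have hjU : j ∉ U := fun hjU => absurd (hUle j hjU) (not_le.mpr hij)
    have hmem : insert j U ∈ incs j := by
      simp only [hincs, Finset.mem_filter, Finset.mem_powerset]
      refine ⟨Finset.insert_subset hj hUS, Finset.mem_insert_self _ _, ?_, ?_⟩
      · intro x hx
        rcases Finset.mem_insert.mp hx with rfl | hx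
        · exact le_refl _
        · exact (hUle x hx).trans hij.le
      · intro x hx y hy hxy
        simp only [Finset.coe_insert, Set.mem_insert_iff] at hx hy
        rcases hx with rfl | hx
        · rcases hy with rfl | hy
          · exact absurd hxy (lt_irrefl _)
          · exact absurd ((hUle y hy).trans_lt hij) (not_lt.mpr hxy.le)
        · rcases hy with rfl | hy
          · rcases eq_or_lt_of_le (hUle x hx) with rfl | hxi
            · exact haij
            · exact (hUmono hx hiU hxi).trans haij
          · exact hUmono hx hy hxy
    have := Finset.le_sup (f := Finset.card) hmem
    rw [Finset.card_insert_of_notMem hjU] at this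
    have e1 : f i = (incs i).sup Finset.card := rfl
    have e2 : f j = (incs j).sup Finset.card := rfl
    omega
  have keyg : ∀ i ∈ S, ∀ j ∈ S, i < j → a j < a i → g i + 1 ≤ g j := by
    intro i hi j hj hij haij
    obtain ⟨U, hU, hUcard⟩ := Finset.exists_mem_eq_sup (decs i) ⟨_, hdecne i hi⟩ Finset.card
    simp only [hdecs, Finset.mem_filter, Finset.mem_powerset] at hU
    obtain ⟨hUS, hiU, hUle, hUmono⟩ := hU
    have hjU : j ∉ U := fun hjU => absurd (hUle j hjU) (not_le.mpr hij)
    have hmem : insert j U ∈ decs j := by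
      simp only [hdecs, Finset.mem_filter, Finset.mem_powerset]
      refine ⟨Finset.insert_subset hj hUS, Finset.mem_insert_self _ _, ?_, ?_⟩
      · intro x hx
        rcases Finset.mem_insert.mp hx with rfl | hx
        · exact le_refl _
        · exact (hUle x hx).trans hij.le
      · intro x hx y hy hxy
        simp only [Finset.coe_insert, Set.mem_insert_iff] at hx hy
        rcases hx with rfl | hx
        · rcases hy with rfl | hy
          · exact absurd hxy (lt_irrefl _)
          · exact absurd ((hUle y hy).trans_lt hij) (not_lt.mpr hxy.le)
        · rcases hy with rfl | hy
          · rcases eq_or_lt_of_le (hUle x hx) with rfl | hxi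
            · exact haij
            · exact haij.trans (hUmono hx hiU hxi)
          · exact hUmono hx hy hxy
    have := Finset.le_sup (f := Finset.card) hmem
    rw [Finset.card_insert_of_notMem hjU] at this
    have e1 : g i = (decs i).sup Finset.card := rfl
    have e2 : g j = (decs j).sup Finset.card := rfl
    omega
  -- the pair map is injective into a k × k grid
  have hcard : S.card ≤ (Finset.range k ×ˢ Finset.range k).card := by
    apply Finset.card_le_card_of_injOn (fun i => (f i - 1, g i - 1))
    · intro i hi
      simp only [Finset.mem_coe, Finset.mem_product, Finset.mem_range]
      constructor
      · have := hf1 i hi; have := hfk i hi; omega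
      · have := hg1 i hi; have := hgk i hi; omega
    · intro i hi j hj hfg
      by_contra hne
      simp only [Prod.mk.injEq] at hfg
      rcases lt_or_gt_of_ne (fun h : i = j => hne h) with hij | hij
      · rcases lt_or_gt_of_ne (fun h : a i = a j => hne (ha h)) with hlt | hlt
        · have := keyf i hi j hj hij hlt
          have := hf1 i hi
          omega
        · have := keyg i hi j hj hij hlt
          have := hg1 i hi
          omega
      · rcases lt_or_gt_of_ne (fun h : a j = a i => hne (ha h).symm) with hlt | hlt
        · have := keyf j hj i hi hij hlt
          have := hf1 j hj
          omega
        · have := keyg j hj i hi hij hlt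
          have := hg1 j hj
          omega
  rw [Finset.card_product, Finset.card_range] at hcard
  omega

/-- A good coloring of `S` with fewer than `B` colors, all fibers monotone. -/
def GoodColoring {n : ℕ} (a : Fin n → ℝ) (S : Finset (Fin n)) (B : ℕ) : Prop :=
  ∃ c : Fin n → ℕ, (∀ i ∈ S, c i < B) ∧
    ∀ j : ℕ, StrictMonoOn a {i | i ∈ S ∧ c i = j} ∨ StrictAntiOn a {i | i ∈ S ∧ c i = j}

theorem good_mono {n : ℕ} {a : Fin n → ℝ} {S : Finset (Fin n)} {B B' : ℕ}
    (h : B ≤ B') (hG : GoodColoring a S B) : GoodColoring a S B' := by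
  obtain ⟨c, hc, hmono⟩ := hG
  exact ⟨c, fun i hi => lt_of_lt_of_le (hc i hi) h, hmono⟩

theorem good_empty {n : ℕ} {a : Fin n → ℝ} {S : Finset (Fin n)} {B : ℕ}
    (h : S.card = 0) : GoodColoring a S B := by
  rw [Finset.card_eq_zero] at h
  subst h
  refine ⟨fun _ => 0, fun i hi => absurd hi (Finset.notMem_empty i), fun j => Or.inl ?_⟩
  intro x hx
  exact absurd hx.1 (Finset.notMem_empty x)

theorem good_step {n : ℕ} {a : Fin n → ℝ} {S T : Finset (Fin n)} {B : ℕ}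
    (hTS : T ⊆ S) (hT : StrictMonoOn a ↑T ∨ StrictAntiOn a ↑T)
    (hG : GoodColoring a (S \ T) B) : GoodColoring a S (B + 1) := by
  classical
  obtain ⟨c, hc, hmono⟩ := hG
  refine ⟨fun i => if i ∈ T then 0 else c i + 1, ?_, ?_⟩
  · intro i hi
    by_cases hiT : i ∈ T
    · simp [hiT]
    · simp only [hiT, if_false]
      have := hc i (Finset.mem_sdiff.mpr ⟨hi, hiT⟩)
      omega
  · intro j
    rcases j with _ | j
    · -- fiber of 0 is contained in T
      have hsub : {i | i ∈ S ∧ (if i ∈ T then 0 else c i + 1) = 0} ⊆ (↑T : Set (Fin n)) := by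
        intro x hx
        by_contra hxT
        simp only [Set.mem_setOf_eq, Finset.mem_coe] at hx hxT
        rw [if_neg hxT] at hx
        omega
      rcases hT with h1 | h1
      · exact Or.inl (h1.mono hsub)
      · exact Or.inr (h1.mono hsub)
    · -- fiber of j+1 is contained in the fiber of j for S \ T
      have hsub : {i | i ∈ S ∧ (if i ∈ T then 0 else c i + 1) = j + 1} ⊆
          {i | i ∈ S \ T ∧ c i = j} := by
        intro x hx
        simp only [Set.mem_setOf_eq] at hx ⊢
        by_cases hxT : x ∈ T
        · rw [if_pos hxT] at hx; omega
        · rw [if_neg hxT] at hx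
          exact ⟨Finset.mem_sdiff.mpr ⟨hx.1, hxT⟩, by omega⟩
      rcases hmono j with h1 | h1
      · exact Or.inl (h1.mono hsub)
      · exact Or.inr (h1.mono hsub)

theorem good_cover {n : ℕ} (a : Fin n → ℝ) (ha : Function.Injective a) (k : ℕ) :
    (∀ S : Finset (Fin n), S.card ≤ k * k → GoodColoring a S (2 * k)) ∧
    (∀ S : Finset (Fin n), S.card ≤ k * (k + 1) → GoodColoring a S (2 * k + 1)) := by
  induction k with
  | zero =>
    constructor
    · intro S hS; exact good_empty (by omega)
    · intro S hS; exact good_empty (by omega)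
  | succ k ih =>
    have part1 : ∀ S : Finset (Fin n), S.card ≤ (k + 1) * (k + 1) →
        GoodColoring a S (2 * (k + 1)) := by
      intro S hS
      by_cases hsmall : S.card ≤ k * (k + 1)
      · exact good_mono (by omega) (ih.2 S hsmall)
      · have hlt : k * k < S.card := by nlinarith
        obtain ⟨T, hTS, hTcard, hTmono⟩ := es_aux a ha k S hlt
        have hrem : (S \ T).card ≤ k * (k + 1) := by
          rw [Finset.card_sdiff_of_subset hTS, hTcard]
          have h1 : (k + 1) * (k + 1) = k * (k + 1) + (k + 1) := by ring
          omega
        have : GoodColoring a S (2 * k + 1 + 1) := good_step hTS hTmono (ih.2 _ hrem)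
        exact good_mono (by omega) this
    refine ⟨part1, ?_⟩
    intro S hS
    by_cases hsmall : S.card ≤ (k + 1) * (k + 1)
    · exact good_mono (by omega) (part1 S hsmall)
    · have hlt : k * k < S.card := by nlinarith
      obtain ⟨T, hTS, hTcard, hTmono⟩ := es_aux a ha k S hlt
      have hrem : (S \ T).card ≤ (k + 1) * (k + 1) := by
        rw [Finset.card_sdiff_of_subset hTS, hTcard]
        have h1 : (k + 1) * (k + 1 + 1) = (k + 1) * (k + 1) + (k + 1) := by ring
        omega
      exact good_step hTS hTmono (part1 _ hrem)

theorem partition_two_sqrt_monotone (n : ℕ) (a : Fin n → ℝ)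
    (ha : Function.Injective a) :
    ∃ (m : ℕ) (c : Fin n → Fin m), m ≤ 2 * ⌈Real.sqrt n⌉₊ ∧
      ∀ j : Fin m, StrictMonoOn a {i | c i = j} ∨ StrictAntiOn a {i | c i = j} := by
  set k := ⌈Real.sqrt n⌉₊ with hk
  have hnk : n ≤ k * k := by
    have h1 : Real.sqrt n ≤ (k : ℝ) := Nat.le_ceil _
    have h0 : (0 : ℝ) ≤ Real.sqrt n := Real.sqrt_nonneg _
    have h2 : (n : ℝ) ≤ (k : ℝ) * (k : ℝ) := by
      calc (n : ℝ) = Real.sqrt n * Real.sqrt n := (Real.mul_self_sqrt (Nat.cast_nonneg n)).symm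
        _ ≤ (k : ℝ) * (k : ℝ) := mul_le_mul h1 h1 h0 (Nat.cast_nonneg k)
    exact_mod_cast h2
  obtain ⟨c, hc, hmono⟩ := (good_cover a ha k).1 Finset.univ (by simpa using hnk)
  refine ⟨2 * k, fun i => ⟨c i, hc i (Finset.mem_univ i)⟩, le_refl _, ?_⟩
  intro j
  have hset : {i | (⟨c i, hc i (Finset.mem_univ i)⟩ : Fin (2 * k)) = j} =
      {i | i ∈ Finset.univ ∧ c i = (j : ℕ)} := by
    ext x
    simp [Fin.ext_iff]
  rw [hset]
  exact hmono j
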